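/- Convolution characterization stability: if gₙ ∈ BUC(ℝ,X) with Beurling spectrum sp(gₙ) ⊆ Λ for all n and gₙ → g uniformly on ℝ, then sp(g) ⊆ closure(Λ). -/

import Mathlib

open Set Filter Topology Complex MeasureTheory
open Real FourierTransform
open scoped ContDiff Manifold

def BUCp {X : Type*} [NormedAddCommGroup X] (g : ℝ → X) : Prop :=
  UniformContinuous g ∧ ∃ C, ∀ t, ‖g t‖ ≤ C

/-- The Fourier transform `φ̃(η) = ∫ e^{-iηt} φ(t) dt`. -/
noncomputable def FT (φ : ℝ → ℂ) : ℝ → ℂ :=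
  fun η => ∫ t : ℝ, Complex.exp (-(Complex.I * η * t)) * φ t

/-- The Beurling spectrum of `g`: those `ξ ∈ ℝ` such that for every `ε > 0` there exists
`φ ∈ L¹(ℝ)` with `supp φ̃ ⊆ (ξ-ε, ξ+ε)` and `φ * g ≠ 0`. -/
def BeurlingSp {X : Type*} [NormedAddCommGroup X] [NormedSpace ℂ X] (g : ℝ → X) : Set ℝ :=
  {ξ | ∀ ε > (0:ℝ), ∃ φ : ℝ → ℂ, Integrable φ ∧
    Function.support (FT φ) ⊆ Ioo (ξ - ε) (ξ + ε) ∧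
    (fun t => ∫ s : ℝ, φ s • g (t - s)) ≠ 0}

lemma expIη_norm (η t : ℝ) : ‖Complex.exp (-(Complex.I * η * t))‖ = 1 := by
  rw [Complex.norm_exp]
  simp

lemma integrable_FT_integrand {φ : ℝ → ℂ} (hφ : Integrable φ) (η : ℝ) :
    Integrable (fun t : ℝ => Complex.exp (-(Complex.I * η * t)) * φ t) := by
  refine hφ.bdd_mul (c := 1) ?_ (ae_of_all _ fun t => le_of_eq (expIη_norm η t))
  exact (Complex.continuous_exp.comp (by fun_prop)).aestronglyMeasurable

lemma FT_eq_fourierIntegral {φ : ℝ → ℂ} (η : ℝ) : FT φ η = 𝓕 φ (η / (2 * π)) := by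
  rw [Real.fourier_real_eq_integral_exp_smul, FT]
  congr 1
  ext t
  rw [smul_eq_mul]
  congr 2
  push_cast
  have : (2 * π : ℂ) ≠ 0 := by
    simp [Real.pi_ne_zero]
  field_simp

lemma FT_conv {φ ρ : ℝ → ℂ} (hφ : Integrable φ) (hρ : Integrable ρ) (η : ℝ) :
    FT (fun t => ∫ s : ℝ, φ s * ρ (t - s)) η = FT φ η * FT ρ η := by
  have e := fun t : ℝ => Complex.exp (-(Complex.I * η * t))
  have hconv : Integrable (fun p : ℝ × ℝ => φ p.2 * ρ (p.1 - p.2))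
      (volume.prod volume) := hφ.convolution_integrand (ContinuousLinearMap.mul ℝ ℂ) hρ
  have hF : Integrable (fun p : ℝ × ℝ =>
      Complex.exp (-(Complex.I * η * p.1)) * (φ p.2 * ρ (p.1 - p.2))) (volume.prod volume) := by
    refine hconv.bdd_mul (c := 1) ?_ (ae_of_all _ fun p => le_of_eq (expIη_norm η p.1))
    exact (Complex.continuous_exp.comp (by fun_prop)).aestronglyMeasurable
  have key : (∫ t : ℝ, ∫ s : ℝ, Complex.exp (-(Complex.I * η * t)) * (φ s * ρ (t - s)))
      = ∫ s : ℝ, ∫ t : ℝ, Complex.exp (-(Complex.I * η * t)) * (φ s * ρ (t - s)) :=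
    integral_integral_swap hF
  calc FT (fun t => ∫ s : ℝ, φ s * ρ (t - s)) η
      = ∫ t : ℝ, ∫ s : ℝ, Complex.exp (-(Complex.I * η * t)) * (φ s * ρ (t - s)) := by
        unfold FT
        congr 1; ext t
        rw [← integral_const_mul]
    _ = ∫ s : ℝ, ∫ t : ℝ, Complex.exp (-(Complex.I * η * t)) * (φ s * ρ (t - s)) := key
    _ = ∫ s : ℝ, Complex.exp (-(Complex.I * η * s)) * φ s * FT ρ η := by
        congr 1; ext s
        have : ∀ t : ℝ, Complex.exp (-(Complex.I * η * t)) * (φ s * ρ (t - s))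
            = (Complex.exp (-(Complex.I * η * s)) * φ s) *
              (Complex.exp (-(Complex.I * η * ((t - s : ℝ) : ℂ))) * ρ (t - s)) := by
          intro t
          have harg : (-(Complex.I * η * t)) = (-(Complex.I * η * s)) +
              (-(Complex.I * η * ((t - s : ℝ) : ℂ))) := by push_cast; ring
          rw [harg, Complex.exp_add]
          ring
        simp_rw [this]
        rw [integral_const_mul]
        congr 1
        exact integral_sub_right_eq_self (fun u : ℝ => Complex.exp (-(Complex.I * η * (u : ℂ))) * ρ u) s
    _ = FT φ η * FT ρ η := by
        unfold FT
        rw [← integral_mul_const]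

noncomputable def toSchwartz (f : ℝ → ℂ) (h1 : ContDiff ℝ ∞ f) (h2 : HasCompactSupport f) :
    SchwartzMap ℝ ℂ where
  toFun := f
  smooth' := h1
  decay' := by
    intro k n
    have hc : Continuous fun x : ℝ => ‖x‖ ^ k * ‖iteratedFDeriv ℝ n f x‖ := by
      exact (continuous_norm.pow k).mul ((h1.continuous_iteratedFDeriv (mod_cast le_top)).norm)
    have hcs : HasCompactSupport fun x : ℝ => ‖x‖ ^ k * ‖iteratedFDeriv ℝ n f x‖ := by
      apply HasCompactSupport.mul_left
      exact (h2.iteratedFDeriv n).norm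
    obtain ⟨C, hC⟩ := hcs.exists_bound_of_continuous hc
    exact ⟨C, fun x => (le_abs_self _).trans ((Real.norm_eq_abs _ ▸ hC x))⟩

lemma exists_inverse (χ : ℝ → ℝ) (h1 : ContDiff ℝ ∞ χ) (h2 : HasCompactSupport χ) :
    ∃ ρ : ℝ → ℂ, Integrable ρ ∧ FT ρ = fun η => (χ η : ℂ) := by
  set ψ : ℝ → ℂ := fun ξ => (χ (2 * π * ξ) : ℂ) with hψ
  have hsm : ContDiff ℝ ∞ ψ :=
    Complex.ofRealCLM.contDiff.comp (h1.comp (contDiff_const.mul contDiff_id))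
  have hsupp : HasCompactSupport ψ := by
    have h3 : HasCompactSupport fun ξ : ℝ => χ (2 * π * ξ) := by
      exact h2.comp_isClosedEmbedding (Homeomorph.mulLeft₀ (2 * π)
        (by positivity)).isClosedEmbedding
    exact h3.comp_left (g := fun x : ℝ => (x : ℂ)) Complex.ofReal_zero
  set Ψ : SchwartzMap ℝ ℂ := toSchwartz ψ hsm hsupp with hΨ
  set ρ : SchwartzMap ℝ ℂ := (SchwartzMap.fourierTransformCLE ℂ (SchwartzMap ℝ ℂ)).symm Ψ with hρ
  refine ⟨ρ, ρ.integrable, ?_⟩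
  have h4 : 𝓕 (ρ : ℝ → ℂ) = (Ψ : ℝ → ℂ) := by
    have := (SchwartzMap.fourierTransformCLE ℂ (SchwartzMap ℝ ℂ)).apply_symm_apply Ψ
    calc 𝓕 (ρ : ℝ → ℂ) = ((SchwartzMap.fourierTransformCLE ℂ (SchwartzMap ℝ ℂ)) ρ : ℝ → ℂ) := by
          rfl
      _ = (Ψ : ℝ → ℂ) := by rw [hρ, this]
  funext η
  rw [FT_eq_fourierIntegral, h4]
  show (χ (2 * π * (η / (2 * π))) : ℂ) = _
  congr 1
  field_simp

lemma FT_sub {φ ψ : ℝ → ℂ} (hφ : Integrable φ) (hψ : Integrable ψ) (η : ℝ) :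
    FT (fun s => φ s - ψ s) η = FT φ η - FT ψ η := by
  unfold FT
  simp_rw [mul_sub]
  exact integral_sub (integrable_FT_integrand hφ η) (integrable_FT_integrand hψ η)

lemma FT_sum {ι : Type*} (S : Finset ι) (f : ι → ℝ → ℂ) (hf : ∀ i ∈ S, Integrable (f i))
    (η : ℝ) : FT (fun s => ∑ i ∈ S, f i s) η = ∑ i ∈ S, FT (f i) η := by
  unfold FT
  simp_rw [Finset.mul_sum]
  exact integral_finset_sum S (fun i hi => integrable_FT_integrand (hf i hi) η)

lemma sum_part (a : ℕ → ℝ) (m : ℕ) :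
    ∑ i ∈ Finset.range m, a i * ∏ j ∈ Finset.range i, (1 - a j)
      = 1 - ∏ i ∈ Finset.range m, (1 - a i) := by
  induction m with
  | zero => simp
  | succ k ih => rw [Finset.sum_range_succ, Finset.prod_range_succ, ih]; ring

lemma conv_integrable {X : Type*} [NormedAddCommGroup X] [NormedSpace ℂ X]
    {φ : ℝ → ℂ} (hφ : Integrable φ) {h : ℝ → X} (hc : Continuous h)
    {C : ℝ} (hC : ∀ t, ‖h t‖ ≤ C) (t : ℝ) :
    Integrable fun s : ℝ => φ s • h (t - s) := by
  have hm : AEStronglyMeasurable (fun s : ℝ => φ s • h (t - s)) volume :=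
    hφ.aestronglyMeasurable.smul
      ((hc.comp (continuous_const.sub continuous_id)).aestronglyMeasurable)
  refine Integrable.mono' (hφ.norm.mul_const C) hm (ae_of_all _ fun s => ?_)
  rw [norm_smul]
  exact mul_le_mul_of_nonneg_left (hC _) (norm_nonneg _)

lemma conv_zero_of_gap {X : Type*} [NormedAddCommGroup X] [NormedSpace ℂ X]
    (h : ℝ → X) (hc : Continuous h) {C : ℝ} (hC : ∀ t, ‖h t‖ ≤ C)
    (a b : ℝ) (hab : a ≤ b)
    (hvan : ∀ k ∈ Icc a b, ∃ δ > 0, ∀ ψ : ℝ → ℂ, Integrable ψ →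
        Function.support (FT ψ) ⊆ Ioo (k - δ) (k + δ) →
        (fun t => ∫ s : ℝ, ψ s • h (t - s)) = 0)
    (φ : ℝ → ℂ) (hφ : Integrable φ) (hsupp : Function.support (FT φ) ⊆ Ioo a b) :
    (fun t => ∫ s : ℝ, φ s • h (t - s)) = 0 := by
  classical
  choose δ hδpos hP using hvan
  -- the open cover
  set U : Icc a b → Set ℝ := fun k => Ioo (k.1 - δ k.1 k.2) (k.1 + δ k.1 k.2) with hU
  have hcov : Icc a b ⊆ ⋃ k : Icc a b, U k := by
    intro x hx
    exact mem_iUnion.2 ⟨⟨x, hx⟩, by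
      simp only [hU, mem_Ioo]
      constructor <;> nlinarith [hδpos x hx]⟩
  obtain ⟨T, hT⟩ := isCompact_Icc.elim_finite_subcover U (fun _ => isOpen_Ioo) hcov
  set L : List (Icc a b) := T.toList with hL
  set m : ℕ := L.length with hm
  have hamem : a ∈ Icc a b := ⟨le_refl a, hab⟩
  set c : ℕ → Icc a b := fun i => L.getD i ⟨a, hamem⟩ with hc'
  set u : ℕ → Set ℝ := fun i => if i < m then U (c i) else ∅ with hu
  have hu_open : ∀ i, IsOpen (u i) := by
    intro i
    by_cases hi : i < m
    · simpa [hu, hi, hU] using isOpen_Ioo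
    · simp [hu, hi]
  have hcov' : Icc a b ⊆ ⋃ i, u i := by
    intro x hx
    obtain ⟨k, hkT, hkU⟩ := mem_iUnion₂.1 (hT hx)
    obtain ⟨i, hi, hik⟩ := List.mem_iff_getElem.1 ((Finset.mem_toList).2 hkT)
    refine mem_iUnion.2 ⟨i, ?_⟩
    have : c i = k := by
      simp only [hc', List.getD_eq_getElem?_getD]
      rw [List.getElem?_eq_getElem hi]
      simpa using hik
    simp [hu, hi, this, hkU, hm, hL, (by simpa using hi : i < T.card)]
  have hfin : ∀ x ∈ Icc a b, {i : ℕ | x ∈ u i}.Finite := by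
    intro x _
    apply Set.Finite.subset (Set.finite_Iio m)
    intro i hi
    by_contra him
    rw [mem_Iio, not_lt] at him
    simp only [mem_setOf_eq, hu, if_neg (Nat.not_lt.2 him)] at hi
    exact hi
  obtain ⟨v, hvK, hv_open, hv_cl⟩ :=
    exists_subset_iUnion_closure_subset isClosed_Icc hu_open hfin hcov'
  -- smooth bumps
  have hbump : ∀ i : ℕ, ∃ θ : ℝ → ℝ, ContDiff ℝ ∞ θ ∧ EqOn θ 0 (u i)ᶜ ∧
      EqOn θ 1 (closure (v i)) ∧ ∀ x, θ x ∈ Icc (0:ℝ) 1 := by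
    intro i
    have hd : Disjoint (u i)ᶜ (closure (v i)) := by
      rw [disjoint_comm]
      exact Disjoint.mono_left (hv_cl i) disjoint_compl_right
    obtain ⟨f, h0, h1, h01⟩ := exists_contMDiffMap_zero_one_of_isClosed 𝓘(ℝ, ℝ) (n := (⊤ : ℕ∞))
      (hu_open i).isClosed_compl isClosed_closure hd
    exact ⟨f, (f.contMDiff.contDiff : ContDiff ℝ _ _), h0, h1, h01⟩
  choose θ hθsm hθ0 hθ1 hθ01 using hbump
  set χ : ℕ → ℝ → ℝ := fun i x => θ i x * ∏ j ∈ Finset.range i, (1 - θ j x) with hχ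
  have hχsm : ∀ i, ContDiff ℝ ∞ (χ i) := by
    intro i
    exact (hθsm i).mul (contDiff_prod fun j _ => contDiff_const.sub (hθsm j))
  have hχsupp : ∀ i, Function.support (χ i) ⊆ u i := by
    intro i x hx
    by_contra hxu
    have : θ i x = 0 := hθ0 i hxu
    simp [hχ, this] at hx
  have hχcs : ∀ i, HasCompactSupport (χ i) := by
    intro i
    have hbdd : Bornology.IsBounded (u i) := by
      by_cases hi : i < m
      · simpa [hu, hi, hU] using Metric.isBounded_Ioo _ _
      · simp [hu, hi]
    apply HasCompactSupport.of_support_subset_isCompact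
      (Metric.isCompact_of_isClosed_isBounded isClosed_closure hbdd.closure)
    exact (hχsupp i).trans subset_closure
  have hχsum : ∀ x ∈ Icc a b, ∑ i ∈ Finset.range m, χ i x = 1 := by
    intro x hx
    have := sum_part (fun i => θ i x) m
    simp only [hχ]
    rw [this]
    obtain ⟨i, hi⟩ := mem_iUnion.1 (hvK hx)
    have hiu : x ∈ u i := hv_cl i (subset_closure hi)
    have him : i < m := by
      by_contra him
      simp [hu, him] at hiu
    have : (1 : ℝ) - θ i x = 0 := by
      have := hθ1 i (subset_closure hi)
      rw [this]
      simp
    rw [Finset.prod_eq_zero (Finset.mem_range.2 him) this]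
    ring
  -- inverse Fourier transforms
  have hinv : ∀ i : ℕ, ∃ ρ : ℝ → ℂ, Integrable ρ ∧ FT ρ = fun η => (χ i η : ℂ) :=
    fun i => exists_inverse (χ i) (hχsm i) (hχcs i)
  choose ρ hρint hρFT using hinv
  set φi : ℕ → ℝ → ℂ := fun i t => ∫ s : ℝ, φ s * ρ i (t - s) with hφi
  have hφi_int : ∀ i, Integrable (φi i) := by
    intro i
    have : φi i = convolution φ (ρ i) (ContinuousLinearMap.mul ℝ ℂ) volume := rfl
    rw [this]
    exact hφ.integrable_convolution _ (hρint i)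
  have hFTφi : ∀ i η, FT (φi i) η = FT φ η * (χ i η : ℂ) := by
    intro i η
    rw [hφi]
    rw [FT_conv hφ (hρint i) η, hρFT i]
  -- each piece vanishes
  have hvan_i : ∀ i < m, (fun t => ∫ s : ℝ, φi i s • h (t - s)) = 0 := by
    intro i him
    refine hP (c i).1 (c i).2 (φi i) (hφi_int i) ?_
    intro η hη
    have hχη : χ i η ≠ 0 := by
      intro h0
      rw [Function.mem_support, hFTφi i η, h0] at hη
      simp at hη
    have : η ∈ u i := hχsupp i hχη
    simpa [hu, him, hU] using this
  -- the remainder vanishes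
  set r : ℝ → ℂ := fun s => φ s - ∑ i ∈ Finset.range m, φi i s with hr
  have hr_int : Integrable r :=
    hφ.sub (integrable_finset_sum _ fun i _ => hφi_int i)
  have hFTr : ∀ η, FT r η = 0 := by
    intro η
    rw [hr]
    rw [FT_sub hφ (integrable_finset_sum _ fun i _ => hφi_int i) η,
      FT_sum (Finset.range m) φi (fun i _ => hφi_int i) η]
    by_cases hη : η ∈ Function.support (FT φ)
    · have hηI : η ∈ Icc a b := Icc_subset_Icc (le_refl a) (le_refl b)
        (mem_Icc.2 ⟨le_of_lt (hsupp hη).1, le_of_lt (hsupp hη).2⟩)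
      have : ∑ i ∈ Finset.range m, FT (φi i) η = FT φ η := by
        calc ∑ i ∈ Finset.range m, FT (φi i) η
            = ∑ i ∈ Finset.range m, FT φ η * (χ i η : ℂ) := by
              exact Finset.sum_congr rfl fun i _ => hFTφi i η
          _ = FT φ η * ((∑ i ∈ Finset.range m, χ i η : ℝ) : ℂ) := by
              rw [← Finset.mul_sum]
              push_cast
              ring
          _ = FT φ η := by rw [hχsum η hηI]; simp
      rw [this]; ring
    · have hφη : FT φ η = 0 := by
        by_contra h0
        exact hη (Function.mem_support.2 h0)
      have : ∀ i ∈ Finset.range m, FT (φi i) η = 0 := by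
        intro i _
        rw [hFTφi i η, hφη, zero_mul]
      rw [Finset.sum_eq_zero this, hφη, sub_zero]
  have hvan_r : (fun t => ∫ s : ℝ, r s • h (t - s)) = 0 := by
    refine hP a hamem r hr_int ?_
    intro η hη
    exact absurd (hFTr η) (Function.mem_support.1 hη)
  -- put everything together
  funext t
  have hsplit : ∀ s : ℝ, φ s = (∑ i ∈ Finset.range m, φi i s) + r s := by
    intro s; simp [hr]
  calc ∫ s : ℝ, φ s • h (t - s)
      = ∫ s : ℝ, ((∑ i ∈ Finset.range m, φi i s) • h (t - s) + r s • h (t - s)) := by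
        congr 1; funext s; rw [← add_smul, ← hsplit]
    _ = (∫ s : ℝ, (∑ i ∈ Finset.range m, φi i s) • h (t - s))
        + ∫ s : ℝ, r s • h (t - s) := by
        refine integral_add ?_ (conv_integrable hr_int hc hC t)
        exact conv_integrable (integrable_finset_sum _ fun i _ => hφi_int i) hc hC t
    _ = (∑ i ∈ Finset.range m, ∫ s : ℝ, φi i s • h (t - s))
        + ∫ s : ℝ, r s • h (t - s) := by
        congr 1
        rw [← integral_finset_sum _ (fun i _ => conv_integrable (hφi_int i) hc hC t)]
        congr 1; funext s; rw [Finset.sum_smul]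
    _ = 0 := by
        rw [Finset.sum_eq_zero, congrFun hvan_r t]
        · simp
        · intro i hi
          exact congrFun (hvan_i i (Finset.mem_range.1 hi)) t

/-- Stability of the Beurling spectrum under uniform limits: if `gₙ ∈ BUC(ℝ,X)` with
`sp(gₙ) ⊆ Λ` for all `n` and `gₙ → g` uniformly on `ℝ`, then `sp(g) ⊆ closure Λ`. -/
theorem stmt19 {X : Type*} [NormedAddCommGroup X] [NormedSpace ℂ X] [CompleteSpace X]
    (Λ : Set ℝ) (gn : ℕ → ℝ → X) (g : ℝ → X)
    (hgn : ∀ n, BUCp (gn n)) (hg : BUCp g)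
    (hsp : ∀ n, BeurlingSp (gn n) ⊆ Λ)
    (hconv : TendstoUniformly gn g atTop) :
    BeurlingSp g ⊆ closure Λ := by
  intro ξ hξ
  by_contra hξc
  rw [Metric.mem_closure_iff] at hξc
  push_neg at hξc
  obtain ⟨ε, hεpos, hε⟩ := hξc
  obtain ⟨φ, hφint, hφsupp, hφne⟩ := hξ (ε/2) (by linarith)
  have hex : ∃ t₀, (∫ s : ℝ, φ s • g (t₀ - s)) ≠ 0 := by
    by_contra h0
    push_neg at h0
    exact hφne (funext h0)
  obtain ⟨t₀, ht₀⟩ := hex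
  obtain ⟨hgU, Cg, hCg⟩ := hg
  set d := ‖∫ s : ℝ, φ s • g (t₀ - s)‖ with hd
  have hdpos : 0 < d := norm_pos_iff.2 ht₀
  set M := ∫ s : ℝ, ‖φ s‖ with hM
  have hM0 : 0 ≤ M := integral_nonneg fun s => norm_nonneg _
  have hε' : 0 < d / (M + 1) := by positivity
  obtain ⟨n, hn⟩ := ((Metric.tendstoUniformly_iff.1 hconv) (d / (M + 1)) hε').exists
  obtain ⟨hgnU, Cn, hCn⟩ := hgn n
  have hgc : Continuous g := hgU.continuous
  have hgnc : Continuous (gn n) := hgnU.continuous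
  have hint1 : Integrable (fun s : ℝ => φ s • g (t₀ - s)) := conv_integrable hφint hgc hCg t₀
  have hint2 : Integrable (fun s : ℝ => φ s • gn n (t₀ - s)) :=
    conv_integrable hφint hgnc hCn t₀
  have hdiff : ‖(∫ s : ℝ, φ s • g (t₀ - s)) - ∫ s : ℝ, φ s • gn n (t₀ - s)‖
      ≤ M * (d / (M + 1)) := by
    rw [← integral_sub hint1 hint2]
    calc ‖∫ s : ℝ, (φ s • g (t₀ - s) - φ s • gn n (t₀ - s))‖
        ≤ ∫ s : ℝ, ‖φ s • g (t₀ - s) - φ s • gn n (t₀ - s)‖ :=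
          norm_integral_le_integral_norm _
      _ ≤ ∫ s : ℝ, ‖φ s‖ * (d / (M + 1)) := by
          refine integral_mono_of_nonneg (ae_of_all _ fun s => norm_nonneg _)
            (hφint.norm.mul_const _) (ae_of_all _ fun s => ?_)
          dsimp only
          rw [← smul_sub, norm_smul]
          refine mul_le_mul_of_nonneg_left ?_ (norm_nonneg _)
          have := hn (t₀ - s)
          rw [dist_eq_norm] at this
          exact le_of_lt this
      _ = M * (d / (M + 1)) := by rw [integral_mul_const]
  have h1 : (M + 1) * (d / (M + 1)) = d := by field_simp
  have hlt : M * (d / (M + 1)) < d := by nlinarith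
  have hne2 : (∫ s : ℝ, φ s • gn n (t₀ - s)) ≠ 0 := by
    intro h0
    rw [h0, sub_zero] at hdiff
    rw [← hd] at hdiff
    linarith
  have hvan : ∀ k ∈ Icc (ξ - ε/2) (ξ + ε/2), ∃ δ > (0:ℝ), ∀ ψ : ℝ → ℂ, Integrable ψ →
      Function.support (FT ψ) ⊆ Ioo (k - δ) (k + δ) →
      (fun t => ∫ s : ℝ, ψ s • gn n (t - s)) = 0 := by
    intro k hk
    have hkΛ : k ∉ Λ := by
      intro hkΛ
      have h2 := hε k hkΛ
      have h3 : dist ξ k ≤ ε/2 := by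
        rw [Real.dist_eq]
        rw [mem_Icc] at hk
        rw [abs_le]
        constructor <;> linarith [hk.1, hk.2]
      linarith
    have hksp : k ∉ BeurlingSp (gn n) := fun hmem => hkΛ (hsp n hmem)
    simp only [BeurlingSp, mem_setOf_eq] at hksp
    push_neg at hksp
    obtain ⟨δ, hδpos, hδ⟩ := hksp
    exact ⟨δ, hδpos, fun ψ hψ hψs => (hδ ψ hψ hψs)⟩
  have hgap := conv_zero_of_gap (gn n) hgnc hCn (ξ - ε/2) (ξ + ε/2) (by linarith)
    hvan φ hφint hφsupp
  exact hne2 (congrFun hgap t₀)
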